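/- arXiv:2405.07668 — 6 statements merged into one kernel-verified Lean document; each statement's English description precedes it below -/
import Mathlib

section
/- Core of Lemma 3.3 (recovery certification of PatchCleanser with revised prediction): fix finite index types ι and κ, a label type Y, a base classifier h : Matrix ι κ ℝ → Y, a set M of binary masks, and a set ℙ of binary patch regions such that every p ∈ ℙ is covered by some m ∈ M. Suppose the image x satisfies the two-masking agreement condition with label y: for all m₀, m₁ ∈ M, h applied to the double-masked mutant of x with entries (1 − m₀ i j) * (1 − m₁ i j) * x i j equals y. Then for every p ∈ ℙ and every p-malicious version x' of x, there exists m₀ ∈ M covering p such that for all m₁ ∈ M, h applied to the double-masked mutant of x' with entries (1 − m₁ i j) * (1 − m₀ i j) * x' i j equals y. -/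
/-- A binary matrix: all entries are 0 or 1. -/
def IsBinary {ι κ : Type*} (a : Matrix ι κ ℝ) : Prop :=
  ∀ i j, a i j = 0 ∨ a i j = 1

/-- The mask `m` covers the patch region `p`. -/
def Covers {ι κ : Type*} (m p : Matrix ι κ ℝ) : Prop :=
  ∀ i j, p i j = 1 → m i j = 1

/-- `x'` is a `p`-malicious version of `x`. -/
def MaliciousVersion {ι κ : Type*} (p x x' : Matrix ι κ ℝ) : Prop :=
  ∀ i j, p i j = 0 → x' i j = x i j

/-- Core of Lemma 3.3: recovery certification of PatchCleanser with revised prediction. -/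
theorem patchcleanser_revised_recovery {ι κ : Type*} [Fintype ι] [Fintype κ] {Y : Type*}
    (h : Matrix ι κ ℝ → Y)
    (M : Set (Matrix ι κ ℝ)) (hM : ∀ m ∈ M, IsBinary m)
    (P : Set (Matrix ι κ ℝ)) (hP : ∀ p ∈ P, IsBinary p)
    (hcover : ∀ p ∈ P, ∃ m ∈ M, Covers m p)
    (x : Matrix ι κ ℝ) (y : Y)
    (hTMA : ∀ m₀ ∈ M, ∀ m₁ ∈ M,
      h (fun i j => (1 - m₀ i j) * (1 - m₁ i j) * x i j) = y) :
    ∀ p ∈ P, ∀ x' : Matrix ι κ ℝ, MaliciousVersion p x x' →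
      ∃ m₀ ∈ M, Covers m₀ p ∧ ∀ m₁ ∈ M,
        h (fun i j => (1 - m₁ i j) * (1 - m₀ i j) * x' i j) = y := by
  intro p hp x' hx'
  obtain ⟨m₀, hm₀M, hcov⟩ := hcover p hp
  refine ⟨m₀, hm₀M, hcov, fun m₁ hm₁ => ?_⟩
  have key : (fun i j => (1 - m₁ i j) * (1 - m₀ i j) * x' i j)
      = (fun i j => (1 - m₀ i j) * (1 - m₁ i j) * x i j) := by
    funext i j
    rcases hP p hp i j with hp0 | hp1
    · rw [hx' i j hp0]; ring
    · rw [hcov i j hp1]; ring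
  rw [key]; exact hTMA m₀ hm₀M m₁ hm₁
end

section
/- Necessary attack condition for masking-based recovery, first-round case (Case 2a of Lemma 3.4): fix finite index types ι and κ, a label type Y, a base classifier h : Matrix ι κ ℝ → Y, and a set M of binary masks. Let p be a binary patch region covered by some mask in M, and let x' be a p-malicious version of an image x. If there is a label y_d such that for all m ∈ M, h applied to the masked mutant of x' with entries (1 − m i j) * x' i j equals y_d, then there exists m₁ ∈ M covering p such that h applied to the masked mutant of x with entries (1 − m₁ i j) * x i j equals y_d. -/
/-- Necessary attack condition for masking-based recovery, first-round case
(Case 2a of Lemma 3.4). -/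
theorem nac_masking_first_round {ι κ : Type*} [Fintype ι] [Fintype κ] {Y : Type*}
    (h : Matrix ι κ ℝ → Y)
    (M : Set (Matrix ι κ ℝ)) (hM : ∀ m ∈ M, IsBinary m)
    (p : Matrix ι κ ℝ) (hp : IsBinary p)
    (hcover : ∃ m ∈ M, Covers m p)
    (x x' : Matrix ι κ ℝ) (hmal : MaliciousVersion p x x')
    (y_d : Y)
    (hagree : ∀ m ∈ M, h (fun i j => (1 - m i j) * x' i j) = y_d) :
    ∃ m₁ ∈ M, Covers m₁ p ∧ h (fun i j => (1 - m₁ i j) * x i j) = y_d := by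
  obtain ⟨m, hmM, hmc⟩ := hcover
  refine ⟨m, hmM, hmc, ?_⟩
  have key : (fun i j => (1 - m i j) * x i j) = (fun i j => (1 - m i j) * x' i j) := by
    funext i j
    rcases hM m hmM i j with hm0 | hm1
    · rcases hp i j with hp0 | hp1
      · rw [hmal i j hp0]
      · rw [hmc i j hp1] at hm0; norm_num at hm0
    · rw [hm1]; ring
  rw [key]; exact hagree m hmM
end

section
/- Necessary attack condition for masking-based recovery, second-round case (Case 2b of Lemma 3.4): fix finite index types ι and κ, a label type Y, a base classifier h : Matrix ι κ ℝ → Y, and a set M of binary masks. Let p be a binary patch region covered by some mask in M, and let x' be a p-malicious version of an image x. Let m ∈ M and suppose there is a label y_d such that for all m' ∈ M, h applied to the double-masked mutant of x' with entries (1 − m i j) * (1 − m' i j) * x' i j equals y_d. Then there exists m' ∈ M covering p such that h applied to the double-masked mutant of x with entries (1 − m i j) * (1 − m' i j) * x i j equals y_d. -/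
/-- Necessary attack condition for masking-based recovery, second-round case
(Case 2b of Lemma 3.4). -/
theorem nac_masking_second_round {ι κ : Type*} [Fintype ι] [Fintype κ] {Y : Type*}
    (h : Matrix ι κ ℝ → Y)
    (M : Set (Matrix ι κ ℝ)) (hM : ∀ m ∈ M, IsBinary m)
    (p : Matrix ι κ ℝ) (hp : IsBinary p)
    (hcover : ∃ m ∈ M, Covers m p)
    (x x' : Matrix ι κ ℝ) (hmal : MaliciousVersion p x x')
    (m : Matrix ι κ ℝ) (hm : m ∈ M)
    (y_d : Y)
    (hagree : ∀ m' ∈ M, h (fun i j => (1 - m i j) * (1 - m' i j) * x' i j) = y_d) :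
    ∃ m' ∈ M, Covers m' p ∧
      h (fun i j => (1 - m i j) * (1 - m' i j) * x i j) = y_d := by
  obtain ⟨m', hm'M, hm'c⟩ := hcover
  refine ⟨m', hm'M, hm'c, ?_⟩
  have := hagree m' hm'M
  rw [← this]
  congr 1
  funext i j
  rcases hp i j with h0 | h1
  · rw [hmal i j h0]
  · rw [hm'c i j h1]; ring
end

section
/- Vote-set inclusions under a patch attack: fix finite index types ι and κ, a label type Y, a classifier f : Matrix ι κ ℝ → Y, a finite set B of binary ablation matrices, a binary patch region p, an image x, and a p-malicious version x' of x. Then for every label y: (i) {b ∈ B : b disjoint from p and f(ablated mutant of x under b) = y} ⊆ {b ∈ B : f(ablated mutant of x' under b) = y}, and (ii) {b ∈ B : f(ablated mutant of x' under b) = y} ⊆ {b ∈ B : b not disjoint from p} ∪ {b ∈ B : b disjoint from p and f(ablated mutant of x under b) = y}. -/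
/-- The ablation `b` is disjoint from the patch region `p`. -/
def DisjointFrom {ι κ : Type*} (b p : Matrix ι κ ℝ) : Prop :=
  ∀ i j, b i j * p i j = 0

lemma ablate_eq {ι κ : Type*} {b p x x' : Matrix ι κ ℝ}
    (hmal : MaliciousVersion p x x') (hd : DisjointFrom b p) :
    (fun i j => x i j * b i j) = (fun i j => x' i j * b i j) := by
  funext i j
  rcases mul_eq_zero.mp (hd i j) with hb | hp0
  · simp [hb]
  · rw [hmal i j hp0]

/-- Vote-set inclusions under a patch attack. -/
theorem vote_set_inclusions {ι κ : Type*} [Fintype ι] [Fintype κ] {Y : Type*}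
    (f : Matrix ι κ ℝ → Y)
    (B : Set (Matrix ι κ ℝ)) (hBfin : B.Finite) (hB : ∀ b ∈ B, IsBinary b)
    (p : Matrix ι κ ℝ) (hp : IsBinary p)
    (x x' : Matrix ι κ ℝ) (hmal : MaliciousVersion p x x') :
    ∀ y : Y,
      ({b | b ∈ B ∧ DisjointFrom b p ∧ f (fun i j => x i j * b i j) = y} ⊆
        {b | b ∈ B ∧ f (fun i j => x' i j * b i j) = y}) ∧
      ({b | b ∈ B ∧ f (fun i j => x' i j * b i j) = y} ⊆
        {b | b ∈ B ∧ ¬ DisjointFrom b p} ∪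
        {b | b ∈ B ∧ DisjointFrom b p ∧ f (fun i j => x i j * b i j) = y}) := by
  intro y
  constructor
  · rintro b ⟨hbB, hd, hf⟩
    exact ⟨hbB, by rw [← ablate_eq hmal hd]; exact hf⟩
  · rintro b ⟨hbB, hf⟩
    by_cases hd : DisjointFrom b p
    · exact Or.inr ⟨hbB, hd, by rw [ablate_eq hmal hd]; exact hf⟩
    · exact Or.inl ⟨hbB, hd⟩
end

section
/- Voting-based recovery certification (margin condition): fix finite index types ι and κ, a label type Y, a classifier f : Matrix ι κ ℝ → Y, a finite set B of binary ablation matrices, an image x, a label y_maj, and Δ : ℕ. Let p be a binary patch region with |{b ∈ B : b not disjoint from p}| ≤ Δ. If for every label y ≠ y_maj we have |{b ∈ B : f(ablated mutant of x under b) = y_maj}| > |{b ∈ B : f(ablated mutant of x under b) = y}| + 2Δ, then for every p-malicious version x' of x and every label y ≠ y_maj, |{b ∈ B : f(ablated mutant of x' under b) = y_maj}| > |{b ∈ B : f(ablated mutant of x' under b) = y}|. -/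
/-- Voting-based recovery certification (margin condition). -/
theorem voting_recovery_certification {ι κ : Type*} [Fintype ι] [Fintype κ] {Y : Type*}
    (f : Matrix ι κ ℝ → Y)
    (B : Set (Matrix ι κ ℝ)) (hBfin : B.Finite) (hB : ∀ b ∈ B, IsBinary b)
    (x : Matrix ι κ ℝ) (y_maj : Y) (Δ : ℕ)
    (p : Matrix ι κ ℝ) (hp : IsBinary p)
    (hΔ : {b | b ∈ B ∧ ¬ DisjointFrom b p}.ncard ≤ Δ)
    (hmargin : ∀ y : Y, y ≠ y_maj →
      {b | b ∈ B ∧ f (fun i j => x i j * b i j) = y_maj}.ncard >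
        {b | b ∈ B ∧ f (fun i j => x i j * b i j) = y}.ncard + 2 * Δ) :
    ∀ x' : Matrix ι κ ℝ, MaliciousVersion p x x' →
      ∀ y : Y, y ≠ y_maj →
        {b | b ∈ B ∧ f (fun i j => x' i j * b i j) = y_maj}.ncard >
          {b | b ∈ B ∧ f (fun i j => x' i j * b i j) = y}.ncard := by
  intro x' hx' y hy
  -- key: equal ablated mutants for disjoint ablations
  have key : ∀ b ∈ B, DisjointFrom b p →
      (fun i j => x' i j * b i j) = (fun i j => x i j * b i j) := by
    intro b hb hd
    funext i j
    rcases hB b hb i j with h0 | h1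
    · simp [h0]
    · have hp0 : p i j = 0 := by
        have := hd i j
        rw [h1, one_mul] at this
        exact this
      rw [hx' i j hp0]
  set S : Set (Matrix ι κ ℝ) := {b | b ∈ B ∧ ¬ DisjointFrom b p} with hS
  have hSfin : S.Finite := hBfin.subset (fun b hb => hb.1)
  have sub1 : ∀ z : Y, {b | b ∈ B ∧ f (fun i j => x' i j * b i j) = z} ⊆
      {b | b ∈ B ∧ f (fun i j => x i j * b i j) = z} ∪ S := by
    intro z b hb
    by_cases hd : DisjointFrom b p
    · left; exact ⟨hb.1, by rw [← key b hb.1 hd]; exact hb.2⟩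
    · right; exact ⟨hb.1, hd⟩
  have sub2 : {b | b ∈ B ∧ f (fun i j => x i j * b i j) = y_maj} ⊆
      {b | b ∈ B ∧ f (fun i j => x' i j * b i j) = y_maj} ∪ S := by
    intro b hb
    by_cases hd : DisjointFrom b p
    · left; exact ⟨hb.1, by rw [key b hb.1 hd]; exact hb.2⟩
    · right; exact ⟨hb.1, hd⟩
  have finA : ∀ z : Y, ({b | b ∈ B ∧ f (fun i j => x i j * b i j) = z}).Finite :=
    fun z => hBfin.subset (fun b hb => hb.1)
  have finA' : ∀ z : Y, ({b | b ∈ B ∧ f (fun i j => x' i j * b i j) = z}).Finite :=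
    fun z => hBfin.subset (fun b hb => hb.1)
  have h1 : {b | b ∈ B ∧ f (fun i j => x' i j * b i j) = y}.ncard ≤
      {b | b ∈ B ∧ f (fun i j => x i j * b i j) = y}.ncard + S.ncard :=
    le_trans (Set.ncard_le_ncard (sub1 y) ((finA y).union hSfin)) (Set.ncard_union_le _ _)
  have h2 : {b | b ∈ B ∧ f (fun i j => x i j * b i j) = y_maj}.ncard ≤
      {b | b ∈ B ∧ f (fun i j => x' i j * b i j) = y_maj}.ncard + S.ncard :=
    le_trans (Set.ncard_le_ncard sub2 ((finA' y_maj).union hSfin)) (Set.ncard_union_le _ _)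
  have hm := hmargin y hy
  have hSΔ : S.ncard ≤ Δ := hΔ
  linarith
end

section
/- Masking-based detection certification: fix finite index types ι and κ, a label type Y, a base classifier h : Matrix ι κ ℝ → Y, and a set M of binary masks. Let x be an image such that for all m ∈ M, h applied to the masked mutant of x with entries (1 − m i j) * x i j equals h x. Let p be a binary patch region covered by some mask in M and let x' be a p-malicious version of x. If h x' ≠ h x, then there exists m ∈ M such that h applied to the masked mutant of x' with entries (1 − m i j) * x' i j differs from h x'. -/
/-- Masking-based detection certification. -/
theorem masking_detection_certification {ι κ : Type*} [Fintype ι] [Fintype κ] {Y : Type*}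
    (h : Matrix ι κ ℝ → Y)
    (M : Set (Matrix ι κ ℝ)) (hM : ∀ m ∈ M, IsBinary m)
    (x : Matrix ι κ ℝ)
    (hconsistent : ∀ m ∈ M, h (fun i j => (1 - m i j) * x i j) = h x)
    (p : Matrix ι κ ℝ) (hp : IsBinary p)
    (hcover : ∃ m ∈ M, Covers m p)
    (x' : Matrix ι κ ℝ) (hmal : MaliciousVersion p x x')
    (hharm : h x' ≠ h x) :
    ∃ m ∈ M, h (fun i j => (1 - m i j) * x' i j) ≠ h x' := by
  obtain ⟨m, hmM, hcov⟩ := hcover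
  refine ⟨m, hmM, ?_⟩
  have key : (fun i j => (1 - m i j) * x' i j) = fun i j => (1 - m i j) * x i j := by
    funext i j
    rcases hM m hmM i j with hm0 | hm1
    · have hp0 : p i j = 0 := by
        rcases hp i j with h0 | h1
        · exact h0
        · exact absurd (hcov i j h1) (by rw [hm0]; norm_num)
      rw [hmal i j hp0]
    · rw [hm1]; ring
  rw [key, hconsistent m hmM]
  exact fun e => hharm e.symm
end
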